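/- Let $f : \mathbb{R} \to \mathbb{C}$ be the restriction to the real line of an entire function $F : \mathbb{C} \to \mathbb{C}$ satisfying $|F(t + si)| \leq e^{2\pi h |s|}$ for all $t, s \in \mathbb{R}$, where $h > 0$, and additionally $|F(z)| \leq 1$ when $z$ is real. Suppose $f(x_0) \neq 0$ for some $x_0 \in \mathbb{R}$. Then $\int_0^{T} \mathrm{card}(\{s \in \mathbb{R} : |s| \leq t, \; f(x_0 + s) = 0\}) \, \frac{dt}{t} \leq 4 T h + \log \frac{1}{|f(x_0)|}$ for every $T > 0$, where zeros are counted with multiplicity. -/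

import Mathlib

open MeasureTheory Real Metric Complex Filter intervalIntegral

/-- Antiderivative/holomorphic logarithm on a ball where `g` doesn't vanish. -/
lemma exists_log_on_ball {g : ℂ → ℂ} (hg : Differentiable ℂ g) {R r : ℝ}
    (hr : 0 < r) (hrR : r < R) (hnz : ∀ z ∈ closedBall (0:ℂ) R, g z ≠ 0) :
    ∃ L : ℂ → ℂ, (∀ z ∈ ball (0:ℂ) r, DifferentiableAt ℂ L z) ∧
      ∀ z ∈ ball (0:ℂ) r, Complex.exp (L z) = g z := by
  have hR : (0:ℝ) < R := hr.trans hrR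
  set h : ℂ → ℂ := fun z => deriv g z / g z with hh_def
  have hderiv : Differentiable ℂ (deriv g) := by
    have := (hg.differentiableOn.analyticOnNhd isOpen_univ).deriv
    exact fun z => (this z (Set.mem_univ z)).differentiableAt
  have hhd : DifferentiableOn ℂ h (closedBall (0:ℂ) R) := fun z hz =>
    ((hderiv z).div (hg z) (hnz z hz)).differentiableWithinAt
  set Rnn : NNReal := ⟨R, hR.le⟩ with hRnn
  have hRnn0 : 0 < Rnn := hR
  have hp : HasFPowerSeriesOnBall h (cauchyPowerSeries h 0 Rnn) 0 Rnn :=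
    DifferentiableOn.hasFPowerSeriesOnBall (by exact hhd) hRnn0
  set p := cauchyPowerSeries h 0 Rnn with hp_def
  set c : ℕ → ℂ := fun n => p.coeff n with hc_def
  set rnn : NNReal := ⟨r, hr.le⟩ with hrnn
  have hrad : (rnn : ENNReal) < p.radius := by
    refine lt_of_lt_of_le ?_ hp.r_le
    exact_mod_cast (show rnn < Rnn from hrR)
  have hsum : Summable fun n => ‖c n‖ * r ^ n := by
    have := p.summable_norm_mul_pow hrad
    simp [hc_def, FormalMultilinearSeries.norm_apply_eq_norm_coef] at this
    exact this
  have hsum_pt : ∀ z ∈ ball (0:ℂ) r, HasSum (fun n => c n * z ^ n) (h z) := by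
    intro z hz
    rw [mem_ball, dist_zero_right] at hz
    have hz' : z ∈ Metric.eball (0:ℂ) Rnn := by
      rw [Metric.mem_eball, edist_zero_right]
      exact_mod_cast (show (‖z‖₊ : ℝ) < Rnn from hz.trans hrR)
    have := hp.hasSum hz'
    simp only [FormalMultilinearSeries.apply_eq_pow_smul_coeff, smul_eq_mul, zero_add] at this
    simpa [mul_comm] using this
  set φ : ℂ → ℂ := fun z => ∑' n : ℕ, (c n / (n+1)) * z ^ (n+1) with hφ_def
  have hterm_bd : ∀ (z : ℂ), ‖z‖ ≤ r → ∀ n : ℕ,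
      ‖(c n / (n+1)) * z ^ (n+1)‖ ≤ ‖c n‖ * r ^ n * r := by
    intro z hz n
    rw [norm_mul, norm_div, norm_pow]
    have h1 : (1:ℝ) ≤ ‖((n:ℂ)+1)‖ := by
      have : ((n:ℂ)+1) = ((n+1:ℕ) : ℂ) := by push_cast; ring
      rw [this, Complex.norm_natCast]
      exact_mod_cast Nat.succ_le_succ (Nat.zero_le n)
    calc ‖c n‖ / ‖((n:ℂ)+1)‖ * ‖z‖ ^ (n+1)
        ≤ ‖c n‖ * r ^ (n+1) := by
          apply mul_le_mul (div_le_self (norm_nonneg _) h1)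
            (pow_le_pow_left₀ (norm_nonneg _) hz _) (by positivity) (norm_nonneg _)
      _ = ‖c n‖ * r ^ n * r := by ring
  have hterm_summ : ∀ z ∈ ball (0:ℂ) r, Summable fun n : ℕ => (c n / (n+1)) * z ^ (n+1) := by
    intro z hz
    rw [mem_ball, dist_zero_right] at hz
    exact Summable.of_norm_bounded (hsum.mul_right r) (hterm_bd z hz.le)
  have hderivφ : ∀ z ∈ ball (0:ℂ) r, HasDerivAt φ (h z) z := by
    intro z hz
    apply hasDerivAt_of_tendstoUniformlyOn (l := atTop)
      (f := fun (t : Finset ℕ) (z : ℂ) => ∑ k ∈ t, (c k / (k+1)) * z ^ (k+1))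
      (f' := fun (t : Finset ℕ) (z : ℂ) => ∑ k ∈ t, c k * z ^ k) isOpen_ball ?_ ?_ ?_ hz
    · have hmaj : ∀ (n : ℕ), ∀ x ∈ ball (0:ℂ) r, ‖c n * x ^ n‖ ≤ ‖c n‖ * r ^ n := by
        intro n x hx
        rw [mem_ball, dist_zero_right] at hx
        rw [norm_mul, norm_pow]
        exact mul_le_mul_of_nonneg_left (pow_le_pow_left₀ (norm_nonneg _) hx.le _)
          (norm_nonneg _)
      have := tendstoUniformlyOn_tsum hsum hmaj
      apply this.congr_right
      intro x hx
      exact (hsum_pt x hx).tsum_eq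
    · filter_upwards with t
      intro x _
      apply HasDerivAt.fun_sum
      intro k _
      have h1 : HasDerivAt (fun z : ℂ => z ^ (k+1)) (((k:ℂ)+1) * x ^ k) x := by
        simpa using hasDerivAt_pow (k+1) x
      have h2 := h1.const_mul (c k / ((k:ℂ)+1))
      refine h2.congr_deriv ?_
      have hk : ((k:ℂ)+1) ≠ 0 := Nat.cast_add_one_ne_zero k
      field_simp
    · intro x hx
      exact (hterm_summ x hx).hasSum
  set L : ℂ → ℂ := fun z => Complex.log (g 0) + φ z with hL_def
  have hLd : ∀ z ∈ ball (0:ℂ) r, HasDerivAt L (h z) z := fun z hz =>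
    (hderivφ z hz).const_add _
  have hball_sub : ball (0:ℂ) r ⊆ closedBall (0:ℂ) R := fun z hz =>
    ball_subset_closedBall (ball_subset_ball hrR.le hz)
  -- g * exp(-L) is constant on the ball
  have hF2 : ∀ z ∈ ball (0:ℂ) r,
      HasDerivAt (fun w => g w * Complex.exp (-(L w))) 0 z := by
    intro z hz
    have h1 : HasDerivAt (fun w => -(L w)) (-(h z)) z := (hLd z hz).neg
    have h2 : HasDerivAt (fun w => Complex.exp (-(L w)))
        (Complex.exp (-(L z)) * (-(h z))) z := h1.cexp
    have h3 := (hg z).hasDerivAt.fun_mul h2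
    refine h3.congr_deriv ?_
    have hgz : g z ≠ 0 := hnz z (hball_sub hz)
    rw [hh_def]
    field_simp
    ring
  have hconst : ∀ z ∈ ball (0:ℂ) r,
      g z * Complex.exp (-(L z)) = g 0 * Complex.exp (-(L 0)) := by
    intro z hz
    have h0m : (0:ℂ) ∈ ball (0:ℂ) r := mem_ball_self hr
    have := (convex_ball (0:ℂ) r).norm_image_sub_le_of_norm_hasDerivWithin_le
      (f := fun w => g w * Complex.exp (-(L w))) (f' := fun _ => 0) (C := 0)
      (fun x hx => (hF2 x hx).hasDerivWithinAt) (fun x _ => by simp) h0m hz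
    have hle : ‖g z * Complex.exp (-(L z)) - g 0 * Complex.exp (-(L 0))‖ ≤ 0 := by
      simpa using this
    exact sub_eq_zero.mp (norm_eq_zero.mp (le_antisymm hle (norm_nonneg _)))
  have hφ0 : φ 0 = 0 := by
    rw [hφ_def]
    simp
  have hL0 : Complex.exp (-(L 0)) = (g 0)⁻¹ := by
    rw [hL_def]
    simp only [hφ0, add_zero, Complex.exp_neg, Complex.exp_log (hnz 0 (by simp [hR.le]))]
  refine ⟨L, fun z hz => (hLd z hz).differentiableAt, fun z hz => ?_⟩
  have hgz : g z ≠ 0 := hnz z (hball_sub hz)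
  have h1 := hconst z hz
  rw [hL0] at h1
  rw [mul_inv_cancel₀ (hnz 0 (by simp [hR.le]))] at h1
  have hexp : Complex.exp (-(L z)) = (g z)⁻¹ := by
    field_simp at h1 ⊢
    linear_combination h1
  rw [Complex.exp_neg] at hexp
  rw [← inv_inv (Complex.exp (L z)), hexp, inv_inv]

/-- Mean value property for the real part of a holomorphic function. -/
lemma mean_value_re {f : ℂ → ℂ} {ρ : ℝ} (hρ : 0 < ρ)
    (hf : ∀ z ∈ closedBall (0:ℂ) ρ, DifferentiableAt ℂ f z) :
    ∫ θ in (0:ℝ)..(2*π), (f (circleMap 0 ρ θ)).re = 2*π*(f 0).re := by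
  have hcm : ∀ θ : ℝ, circleMap 0 ρ θ ∈ closedBall (0:ℂ) ρ := fun θ =>
    sphere_subset_closedBall (circleMap_mem_sphere 0 hρ.le θ)
  have hcont : Continuous fun θ : ℝ => f (circleMap 0 ρ θ) := by
    rw [continuous_iff_continuousAt]
    intro θ
    exact (hf _ (hcm θ)).continuousAt.comp (continuous_circleMap 0 ρ).continuousAt
  have hd : DiffContOnCl ℂ f (ball (0:ℂ) ρ) := by
    constructor
    · exact fun z hz => (hf z (ball_subset_closedBall hz)).differentiableWithinAt
    · rw [closure_ball 0 hρ.ne']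
      exact fun z hz => (hf z hz).continuousAt.continuousWithinAt
  have hC := hd.circleIntegral_sub_inv_smul (w := 0) (by simp [hρ])
  rw [circleIntegral] at hC
  simp only [deriv_circleMap, smul_eq_mul, sub_zero] at hC
  have heq : ∀ θ : ℝ, circleMap 0 ρ θ * I * ((circleMap 0 ρ θ)⁻¹ * f (circleMap 0 ρ θ))
      = I * f (circleMap 0 ρ θ) := by
    intro θ
    have : circleMap 0 ρ θ ≠ 0 := by
      simpa using circleMap_ne_center (c := (0:ℂ)) hρ.ne' (θ := θ)
    field_simp
  rw [intervalIntegral.integral_congr (fun θ _ => heq θ)] at hC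
  rw [intervalIntegral.integral_const_mul] at hC
  have hI : (I : ℂ) ≠ 0 := I_ne_zero
  have h2 : ∫ θ in (0:ℝ)..(2*π), f (circleMap 0 ρ θ) = 2 * π * f 0 := by
    have : I * ∫ θ in (0:ℝ)..(2*π), f (circleMap 0 ρ θ) = I * (2 * π * f 0) := by
      rw [hC]; push_cast; ring
    exact mul_left_cancel₀ hI this
  have hint : IntervalIntegrable (fun θ => f (circleMap 0 ρ θ)) volume 0 (2*π) :=
    hcont.intervalIntegrable _ _
  have h3 : (∫ θ in (0:ℝ)..(2*π), f (circleMap 0 ρ θ)).re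
      = ∫ θ in (0:ℝ)..(2*π), (f (circleMap 0 ρ θ)).re := by
    exact (Complex.reCLM.intervalIntegral_comp_comm hint).symm
  rw [← h3, h2]
  simp

lemma zeros_finite {F : ℂ → ℂ} (hF : Differentiable ℂ F) {w : ℂ} (hw : F w ≠ 0)
    {K : Set ℂ} (hK : IsCompact K) : {z : ℂ | z ∈ K ∧ F z = 0}.Finite := by
  by_contra hinf
  have hinf' : Set.Infinite {z : ℂ | z ∈ K ∧ F z = 0} := hinf
  obtain ⟨x, -, hacc⟩ := hinf'.exists_accPt_of_subset_isCompact hK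
    (fun z hz => hz.1)
  rw [accPt_iff_frequently] at hacc
  have hfreq : ∃ᶠ z in nhdsWithin x {x}ᶜ, F z = 0 := by
    rw [frequently_nhdsWithin_iff]
    exact hacc.mono (fun y hy => ⟨hy.2.2, hy.1⟩)
  have hev := ((hF.analyticAt x).frequently_zero_iff_eventually_zero).mp hfreq
  have hfreq2 : ∃ᶠ z in nhdsWithin x {x}ᶜ, F z = 0 := hfreq
  have : Set.EqOn F 0 Set.univ := by
    apply AnalyticOnNhd.eqOn_zero_of_preconnected_of_frequently_eq_zero
      (fun z _ => hF.analyticAt z) isPreconnected_univ (Set.mem_univ x) hfreq2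
  exact hw (this (Set.mem_univ w))

lemma factor_zeros (S : Finset ℂ) : ∀ (F : ℂ → ℂ), Differentiable ℂ F → (∃ z, F z ≠ 0) →
    (∀ a ∈ S, F a = 0) →
    ∃ (g : ℂ → ℂ) (m : ℂ → ℕ), Differentiable ℂ g ∧ (∀ a ∈ S, 1 ≤ m a) ∧
      (∀ z, F z = g z * ∏ a ∈ S, (z - a)^(m a)) ∧ (∀ z, g z = 0 → F z = 0) ∧
      (∀ a ∈ S, g a ≠ 0) := by
  induction S using Finset.induction_on with
  | empty =>
    intro F hF _ _
    exact ⟨F, fun _ => 0, hF, by simp, by simp, fun z h => h, by simp⟩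
  | insert a S ha IH =>
    intro F hF hne hS
    have hFa : F a = 0 := hS a (Finset.mem_insert_self a S)
    have hA : AnalyticAt ℂ F a := hF.analyticAt a
    have hord_ne_top : analyticOrderAt F a ≠ ⊤ := by
      intro htop
      rw [analyticOrderAt_eq_top] at htop
      have hev := htop
      obtain ⟨w, hw⟩ := hne
      have hfreq : ∃ᶠ z in nhdsWithin a {a}ᶜ, F z = 0 :=
        (hev.filter_mono nhdsWithin_le_nhds).frequently
      have : Set.EqOn F 0 Set.univ :=
        AnalyticOnNhd.eqOn_zero_of_preconnected_of_frequently_eq_zero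
          (fun z _ => hF.analyticAt z) isPreconnected_univ (Set.mem_univ a) hfreq
      exact hw (this (Set.mem_univ w))
    set m : ℕ := (analyticOrderAt F a).toNat with hm_def
    have hordm : analyticOrderAt F a = m := (ENat.coe_toNat hord_ne_top).symm
    obtain ⟨glo, hglo_an, hglo_ne, hglo_eq⟩ := (hA.analyticOrderAt_eq_natCast).mp hordm
    have hm1 : 1 ≤ m := by
      rcases Nat.eq_zero_or_pos m with hm0 | hm0
      · exfalso
        have := hglo_eq.self_of_nhds
        rw [hm0] at this
        simp at this
        exact hglo_ne (by rw [← this]; exact hFa)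
      · exact hm0
    set F1 : ℂ → ℂ := fun z => if z = a then glo a else F z / (z - a)^m with hF1_def
    have hloc : F1 =ᶠ[nhds a] glo := by
      filter_upwards [hglo_eq] with z hz
      by_cases hza : z = a
      · simp [hF1_def, hza]
      · have hzane : (z - a)^m ≠ 0 := pow_ne_zero _ (sub_ne_zero.mpr hza)
        simp only [hF1_def, if_neg hza]
        rw [hz, smul_eq_mul]
        field_simp
    have hF1d : Differentiable ℂ F1 := by
      intro z
      by_cases hza : z = a
      · subst hza
        exact hloc.differentiableAt_iff.mpr hglo_an.differentiableAt
      · have hev : F1 =ᶠ[nhds z] fun w => F w / (w - a)^m := by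
          filter_upwards [eventually_ne_nhds hza] with w hw
          simp [hF1_def, hw]
        apply hev.differentiableAt_iff.mpr
        exact (hF z).div ((differentiable_id.sub_const a).pow m z)
          (pow_ne_zero _ (sub_ne_zero.mpr hza))
    have hfac : ∀ z, F z = F1 z * (z - a)^m := by
      intro z
      by_cases hza : z = a
      · subst hza
        rw [hFa]
        rw [sub_self, zero_pow (by omega), mul_zero]
      · simp only [hF1_def, if_neg hza]
        rw [div_mul_cancel₀ _ (pow_ne_zero _ (sub_ne_zero.mpr hza))]
    have hF1S : ∀ b ∈ S, F1 b = 0 := by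
      intro b hb
      have hba : b ≠ a := fun hba => ha (hba ▸ hb)
      have := hfac b
      rw [hS b (Finset.mem_insert_of_mem hb)] at this
      exact ((mul_eq_zero.mp this.symm).resolve_right
        (pow_ne_zero _ (sub_ne_zero.mpr hba)))
    have hF1a : F1 a ≠ 0 := by simpa [hF1_def] using hglo_ne
    obtain ⟨g, m', hg, hm', hfac', hz', hgS⟩ := IH F1 hF1d ⟨a, hF1a⟩ hF1S
    refine ⟨g, Function.update m' a m, hg, ?_, ?_, ?_, ?_⟩
    · intro b hb
      rcases Finset.mem_insert.mp hb with hba | hbS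
      · rw [hba, Function.update_self]; exact hm1
      · have hbne : b ≠ a := by rintro rfl; exact ha hbS
        rw [Function.update_of_ne hbne _ _]
        exact hm' b hbS
    · intro z
      rw [Finset.prod_insert ha, Function.update_self]
      have hprod : ∏ b ∈ S, (z - b)^(Function.update m' a m b)
          = ∏ b ∈ S, (z - b)^(m' b) := by
        apply Finset.prod_congr rfl
        intro b hb
        have hbne : b ≠ a := by rintro rfl; exact ha hb
        rw [Function.update_of_ne hbne _ _]
      rw [hprod, hfac z, hfac' z]
      ring
    · intro z hz
      rw [hfac z, hz' z hz, zero_mul]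
    · intro b hb
      rcases Finset.mem_insert.mp hb with hba | hbS
      · subst hba
        intro hga
        apply hF1a
        rw [hfac' b, hga, zero_mul]
      · exact hgS b hbS

lemma jensen_at_radius {G : ℂ → ℂ} (hG : Differentiable ℂ G) (hG0 : G 0 ≠ 0)
    {ρ : ℝ} (hρ : 0 < ρ) (hsph : ∀ z ∈ sphere (0:ℂ) ρ, G z ≠ 0) :
    ∃ (S : Finset ℂ) (m : ℂ → ℕ),
      (∀ a, ‖a‖ ≤ ρ → G a = 0 → a ∈ S) ∧
      (∀ a ∈ S, ‖a‖ < ρ ∧ a ≠ 0 ∧ 1 ≤ m a) ∧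
      (IntervalIntegrable (fun θ => Real.log (‖G (circleMap 0 ρ θ)‖))
        volume 0 (2*π)) ∧
      (∫ θ in (0:ℝ)..(2*π), Real.log (‖G (circleMap 0 ρ θ)‖))
        = 2*π*Real.log (‖G 0‖)
          + 2*π*∑ a ∈ S, (m a : ℝ) * (Real.log ρ - Real.log (‖a‖)) := by
  have hfin := zeros_finite hG hG0 (isCompact_closedBall (0:ℂ) ρ)
  set S : Finset ℂ := hfin.toFinset with hS_def
  have hmemS : ∀ a, (a ∈ S ↔ ‖a‖ ≤ ρ ∧ G a = 0) := by
    intro a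
    rw [hS_def, Set.Finite.mem_toFinset]
    simp [mem_closedBall, Complex.dist_eq]
  obtain ⟨g, m, hg, hm1, hfac, hgz, hgS⟩ := factor_zeros S G hG ⟨0, hG0⟩
    (fun a ha => ((hmemS a).mp ha).2)
  -- S properties
  have hSlt : ∀ a ∈ S, ‖a‖ < ρ ∧ a ≠ 0 ∧ 1 ≤ m a := by
    intro a ha
    obtain ⟨hle, hz⟩ := (hmemS a).mp ha
    refine ⟨lt_of_le_of_ne hle ?_, ?_, hm1 a ha⟩
    · intro habs
      exact hsph a (by simp [mem_sphere_iff_norm, habs]) hz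
    · intro h0
      exact hG0 (h0 ▸ hz)
  -- g has no zeros on a slightly larger closed ball
  have hgU : ∀ z ∈ closedBall (0:ℂ) ρ, g z ≠ 0 := by
    intro z hz hgz0
    have hGz : G z = 0 := hgz z hgz0
    have hzS : z ∈ S := (hmemS z).mpr ⟨by simpa [Complex.dist_eq] using hz, hGz⟩
    exact hgS z hzS hgz0
  have hopen : IsOpen {z : ℂ | g z ≠ 0} :=
    isOpen_compl_singleton.preimage hg.continuous
  obtain ⟨δ, hδ, hsub⟩ := (isCompact_closedBall (0:ℂ) ρ).exists_cthickening_subset_open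
    hopen hgU
  have hball_incl : closedBall (0:ℂ) (ρ+δ) ⊆ cthickening δ (closedBall (0:ℂ) ρ) := by
    intro z hz
    rw [mem_closedBall, Complex.dist_eq, sub_zero] at hz
    by_cases hzρ : ‖z‖ ≤ ρ
    · exact self_subset_cthickening _ (by simpa [mem_closedBall, Complex.dist_eq] using hzρ)
    · push_neg at hzρ
      have hz0 : z ≠ 0 := by
        intro h0; rw [h0] at hzρ; simp at hzρ; linarith
      set w : ℂ := ((ρ / ‖z‖ : ℝ) : ℂ) * z with hw_def
      have hwmem : w ∈ closedBall (0:ℂ) ρ := by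
        rw [mem_closedBall, Complex.dist_eq, sub_zero, hw_def, norm_mul]
        have habs : ‖z‖ ≠ 0 := by simpa using hz0
        rw [Complex.norm_real, Real.norm_eq_abs, _root_.abs_of_nonneg (by positivity : (0:ℝ) ≤ ρ / ‖z‖),
          div_mul_cancel₀ _ habs]
      have hdist : dist z w ≤ δ := by
        rw [Complex.dist_eq, hw_def]
        have : z - ((ρ / ‖z‖ : ℝ) : ℂ) * z = ((1 - ρ / ‖z‖ : ℝ) : ℂ) * z := by
          push_cast; ring
        rw [this, norm_mul, Complex.norm_real, Real.norm_eq_abs]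
        rw [_root_.abs_of_nonneg (by rw [sub_nonneg]; exact div_le_one_of_le₀ hzρ.le (by positivity))]
        have habs : ‖z‖ ≠ 0 := by simpa using hz0
        rw [sub_mul, one_mul, div_mul_cancel₀ _ habs]
        linarith
      exact mem_cthickening_of_dist_le z w δ _ hwmem hdist
  have hnzR : ∀ z ∈ closedBall (0:ℂ) (ρ+δ), g z ≠ 0 := fun z hz => hsub (hball_incl hz)
  -- holomorphic log of g
  obtain ⟨L, hLd, hLexp⟩ := exists_log_on_ball hg (R := ρ+δ) (r := ρ+δ/2)
    (by linarith) (by linarith) hnzR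
  have hball2 : closedBall (0:ℂ) ρ ⊆ ball (0:ℂ) (ρ+δ/2) := by
    intro z hz
    rw [mem_closedBall] at hz; rw [mem_ball]
    linarith
  have hLre : ∀ z ∈ ball (0:ℂ) (ρ+δ/2), (L z).re = Real.log (‖g z‖) := by
    intro z hz
    rw [← hLexp z hz, Complex.norm_exp, Real.log_exp]
  have MV_L : ∫ θ in (0:ℝ)..(2*π), (L (circleMap 0 ρ θ)).re = 2*π*(L 0).re :=
    mean_value_re hρ (fun z hz => hLd z (hball2 hz))
  have hcm_mem : ∀ θ : ℝ, circleMap 0 ρ θ ∈ closedBall (0:ℂ) ρ := fun θ =>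
    sphere_subset_closedBall (circleMap_mem_sphere 0 hρ.le θ)
  have habs_cm : ∀ θ : ℝ, ‖circleMap 0 ρ θ‖ = ρ := by
    intro θ
    have := circleMap_mem_sphere 0 hρ.le θ
    simpa [mem_sphere_iff_norm] using this
  -- Blaschke-type integral for each zero
  have hBla : ∀ a ∈ S, ∫ θ in (0:ℝ)..(2*π),
      Real.log (‖circleMap 0 ρ θ - a‖) = 2*π*Real.log ρ := by
    intro a ha
    obtain ⟨haρ, -, -⟩ := hSlt a ha
    set q : ℂ → ℂ := fun z => (ρ:ℂ)*(ρ:ℂ) - (starRingEnd ℂ a) * z with hq_def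
    have hq_re : ∀ z ∈ closedBall (0:ℂ) ρ, 0 < (q z).re := by
      intro z hz
      rw [mem_closedBall, Complex.dist_eq, sub_zero] at hz
      have h1 : ((starRingEnd ℂ a) * z).re ≤ ‖a‖ * ‖z‖ := by
        calc ((starRingEnd ℂ a) * z).re ≤ ‖(starRingEnd ℂ a) * z‖ :=
              Complex.re_le_norm _
          _ = ‖a‖ * ‖z‖ := by rw [norm_mul, Complex.norm_conj]
      have h2 : ‖a‖ * ‖z‖ ≤ ‖a‖ * ρ :=
        mul_le_mul_of_nonneg_left hz (norm_nonneg a)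
      have h3 : ‖a‖ * ρ < ρ * ρ := by
        apply mul_lt_mul_of_pos_right haρ hρ
      have : (q z).re = ρ*ρ - ((starRingEnd ℂ a) * z).re := by
        simp [hq_def]
      rw [this]
      linarith
    have hqd : ∀ z ∈ closedBall (0:ℂ) ρ, DifferentiableAt ℂ (fun z => Complex.log (q z)) z := by
      intro z hz
      apply DifferentiableAt.clog
      · exact (differentiableAt_const _).sub ((differentiableAt_id).const_mul _)
      · exact Complex.mem_slitPlane_iff.mpr (Or.inl (hq_re z hz))
    have MV_q := mean_value_re hρ hqd
    simp only [Complex.log_re] at MV_q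
    have hq0 : ‖q 0‖ = ρ*ρ := by
      simp [hq_def, Complex.norm_real, abs_of_pos hρ]
    rw [hq0] at MV_q
    -- pointwise identity
    have hpt : ∀ θ : ℝ, Real.log (‖q (circleMap 0 ρ θ)‖)
        = Real.log ρ + Real.log (‖circleMap 0 ρ θ - a‖) := by
      intro θ
      set z := circleMap 0 ρ θ with hz_def
      have hzρ : ‖z‖ = ρ := habs_cm θ
      have hza : z ≠ a := by
        intro h
        rw [h] at hzρ
        exact absurd hzρ (ne_of_lt haρ)
      have hkey : q z = z * (starRingEnd ℂ) (z - a) := by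
        rw [hq_def, map_sub, mul_sub]
        have : z * (starRingEnd ℂ) z = ((ρ*ρ : ℝ) : ℂ) := by
          rw [Complex.mul_conj]
          norm_cast
          rw [Complex.normSq_eq_norm_sq, hzρ]
          ring
        rw [this]
        push_cast
        ring
      rw [hkey, norm_mul, Complex.norm_conj, hzρ]
      rw [Real.log_mul hρ.ne' (by
        simp only [ne_eq, norm_eq_zero, sub_eq_zero]; exact hza)]
    have hcont_v : Continuous fun θ : ℝ => Real.log (‖circleMap 0 ρ θ - a‖) := by
      apply Continuous.log
      · exact continuous_norm.comp ((continuous_circleMap 0 ρ).sub continuous_const)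
      · intro θ
        have hne : circleMap 0 ρ θ - a ≠ 0 := by
          rw [sub_ne_zero]
          intro h
          rw [← h, habs_cm θ] at haρ
          exact lt_irrefl _ haρ
        exact (norm_pos_iff.mpr hne).ne'
    have hInt_v : IntervalIntegrable (fun θ : ℝ =>
        Real.log (‖circleMap 0 ρ θ - a‖)) volume 0 (2*π) :=
      hcont_v.intervalIntegrable _ _
    have : ∫ θ in (0:ℝ)..(2*π), Real.log (‖q (circleMap 0 ρ θ)‖)
        = ∫ θ in (0:ℝ)..(2*π), (Real.log ρ
          + Real.log (‖circleMap 0 ρ θ - a‖)) :=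
      intervalIntegral.integral_congr (fun θ _ => hpt θ)
    rw [this, intervalIntegral.integral_add (intervalIntegrable_const) hInt_v,
      intervalIntegral.integral_const] at MV_q
    have hlogρρ : Real.log (ρ*ρ) = Real.log ρ + Real.log ρ := Real.log_mul hρ.ne' hρ.ne'
    rw [hlogρρ] at MV_q
    have h2π : (0:ℝ) < 2*π := by positivity
    simp only [smul_eq_mul] at MV_q
    linarith [MV_q]
  -- continuity of the zero-factor integrands
  have hv_cont : ∀ a ∈ S, Continuous fun θ : ℝ =>
      Real.log (‖circleMap 0 ρ θ - a‖) := by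
    intro a ha
    obtain ⟨haρ, -, -⟩ := hSlt a ha
    apply Continuous.log
    · exact continuous_norm.comp ((continuous_circleMap 0 ρ).sub continuous_const)
    · intro θ
      have hne : circleMap 0 ρ θ - a ≠ 0 := by
        rw [sub_ne_zero]
        intro h
        rw [← h, habs_cm θ] at haρ
        exact lt_irrefl _ haρ
      exact (norm_pos_iff.mpr hne).ne'
  -- logarithm of the factorization
  have hlog_prod : ∀ z : ℂ, (∀ a ∈ S, z ≠ a) → g z ≠ 0 →
      Real.log (‖G z‖) = Real.log (‖g z‖)
        + ∑ a ∈ S, (m a : ℝ) * Real.log (‖z - a‖) := by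
    intro z hzne hgz0
    have hterm_ne : ∀ a ∈ S, ‖(z - a) ^ m a‖ ≠ 0 := by
      intro a ha
      simp only [norm_pow, ne_eq, pow_eq_zero_iff', norm_eq_zero, sub_eq_zero]
      intro ⟨h1, _⟩
      exact hzne a ha h1
    have hprod_ne : ∏ a ∈ S, ‖(z - a) ^ m a‖ ≠ 0 :=
      Finset.prod_ne_zero_iff.mpr hterm_ne
    rw [hfac z, norm_mul, norm_prod]
    rw [Real.log_mul (by simpa using hgz0) hprod_ne]
    rw [Real.log_prod hterm_ne]
    congr 1
    apply Finset.sum_congr rfl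
    intro a ha
    rw [norm_pow, Real.log_pow]
  -- pointwise identity on the circle
  have hpt2 : ∀ θ : ℝ, Real.log (‖G (circleMap 0 ρ θ)‖)
      = (L (circleMap 0 ρ θ)).re
        + ∑ a ∈ S, (m a : ℝ) * Real.log (‖circleMap 0 ρ θ - a‖) := by
    intro θ
    have hzS : ∀ a ∈ S, circleMap 0 ρ θ ≠ a := by
      intro a ha h
      obtain ⟨haρ, -, -⟩ := hSlt a ha
      rw [← h, habs_cm θ] at haρ
      exact lt_irrefl _ haρ
    have hgz0 : g (circleMap 0 ρ θ) ≠ 0 := hgU _ (hcm_mem θ)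
    rw [hlog_prod _ hzS hgz0, hLre _ (hball2 (hcm_mem θ))]
  have hfun : (fun θ : ℝ => Real.log (‖G (circleMap 0 ρ θ)‖))
      = fun θ => (L (circleMap 0 ρ θ)).re
        + ∑ a ∈ S, (m a : ℝ) * Real.log (‖circleMap 0 ρ θ - a‖) :=
    funext hpt2
  -- continuity of (L ∘ circleMap).re
  have hf0_cont : Continuous fun θ : ℝ => (L (circleMap 0 ρ θ)).re := by
    rw [continuous_iff_continuousAt]
    intro θ
    have h1 : ContinuousAt L (circleMap 0 ρ θ) :=
      (hLd _ (hball2 (hcm_mem θ))).continuousAt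
    exact (Complex.continuous_re.continuousAt).comp
      (h1.comp (continuous_circleMap 0 ρ).continuousAt)
  have hfsum_cont : Continuous fun θ : ℝ =>
      ∑ a ∈ S, (m a : ℝ) * Real.log (‖circleMap 0 ρ θ - a‖) := by
    apply continuous_finset_sum
    intro a ha
    exact continuous_const.mul (hv_cont a ha)
  have hint : IntervalIntegrable (fun θ => Real.log (‖G (circleMap 0 ρ θ)‖))
      volume 0 (2*π) := by
    rw [hfun]
    exact (hf0_cont.add hfsum_cont).intervalIntegrable _ _
  refine ⟨S, m, fun a h1 h2 => (hmemS a).mpr ⟨h1, h2⟩, hSlt, hint, ?_⟩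
  rw [hfun]
  rw [intervalIntegral.integral_add (hf0_cont.intervalIntegrable _ _)
    (hfsum_cont.intervalIntegrable _ _)]
  rw [intervalIntegral.integral_finset_sum
    (fun a ha => (continuous_const.fun_mul (hv_cont a ha)).intervalIntegrable _ _)]
  have hsum_val : ∀ a ∈ S, ∫ θ in (0:ℝ)..(2*π),
      (m a : ℝ) * Real.log (‖circleMap 0 ρ θ - a‖)
      = (m a : ℝ) * (2*π*Real.log ρ) := by
    intro a ha
    rw [intervalIntegral.integral_const_mul, hBla a ha]
  rw [Finset.sum_congr rfl hsum_val, MV_L]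
  have h0ball : (0:ℂ) ∈ ball (0:ℂ) (ρ+δ/2) := by
    rw [mem_ball]
    simp only [dist_self]
    linarith
  rw [hLre 0 h0ball]
  -- value of log |G 0|
  have hG0log : Real.log (‖G 0‖) = Real.log (‖g 0‖)
      + ∑ a ∈ S, (m a : ℝ) * Real.log (‖a‖) := by
    have h0ne : ∀ a ∈ S, (0:ℂ) ≠ a := by
      intro a ha h
      exact (hSlt a ha).2.1 h.symm
    rw [hlog_prod 0 h0ne (hgU 0 (by simp [hρ.le]))]
    congr 1
    apply Finset.sum_congr rfl
    intro a ha
    rw [zero_sub, norm_neg]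
  rw [hG0log]
  have hsplit : ∑ a ∈ S, (m a : ℝ) * (Real.log ρ - Real.log (‖a‖))
      = (∑ a ∈ S, (m a : ℝ) * Real.log ρ) - ∑ a ∈ S, (m a : ℝ) * Real.log (‖a‖) := by
    rw [← Finset.sum_sub_distrib]
    apply Finset.sum_congr rfl
    intro a ha
    ring
  have hS1 : ∑ a ∈ S, (m a : ℝ) * (2*π*Real.log ρ)
      = 2*π*∑ a ∈ S, (m a : ℝ) * Real.log ρ := by
    rw [Finset.mul_sum]
    apply Finset.sum_congr rfl
    intro a ha
    ring
  rw [hS1, hsplit]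
  ring

lemma integral_abs_sin : ∫ θ in (0:ℝ)..(2*π), |Real.sin θ| = 4 := by
  have hpi : (0:ℝ) ≤ π := Real.pi_pos.le
  have h1 : ∫ θ in (0:ℝ)..π, |Real.sin θ| = 2 := by
    have : ∀ θ ∈ Set.uIcc (0:ℝ) π, |Real.sin θ| = Real.sin θ := by
      intro θ hθ
      rw [Set.uIcc_of_le hpi] at hθ
      exact abs_of_nonneg (Real.sin_nonneg_of_nonneg_of_le_pi hθ.1 hθ.2)
    rw [intervalIntegral.integral_congr this, integral_sin]
    norm_num
  have h2 : ∫ θ in π..(2*π), |Real.sin θ| = 2 := by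
    have := intervalIntegral.integral_comp_add_right (a := (0:ℝ)) (b := π)
      (fun x => |Real.sin x|) π
    rw [zero_add] at this
    rw [show (2*π : ℝ) = π + π by ring, ← this]
    have heq : ∀ θ ∈ Set.uIcc (0:ℝ) π, |Real.sin (θ + π)| = Real.sin θ := by
      intro θ hθ
      rw [Set.uIcc_of_le hpi] at hθ
      rw [Real.sin_add_pi, abs_neg]
      exact abs_of_nonneg (Real.sin_nonneg_of_nonneg_of_le_pi hθ.1 hθ.2)
    rw [intervalIntegral.integral_congr heq, integral_sin]
    norm_num
  have hadj := intervalIntegral.integral_add_adjacent_intervals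
    (a := (0:ℝ)) (b := π) (c := 2*π)
    (Real.continuous_sin.abs.intervalIntegrable (μ := volume) _ _)
    (Real.continuous_sin.abs.intervalIntegrable (μ := volume) _ _)
  rw [h1, h2] at hadj
  linarith

theorem jensen_zero_count_bound (F : ℂ → ℂ) (hF : Differentiable ℂ F)
    (h : ℝ) (hh : 0 < h)
    (hgrowth : ∀ t s : ℝ, ‖F (t + s * Complex.I)‖ ≤ Real.exp (2 * π * h * |s|))
    (hbd : ∀ t : ℝ, ‖F (t : ℂ)‖ ≤ 1)
    (x0 : ℝ) (h0 : F (x0 : ℂ) ≠ 0) (T : ℝ) (hT : 0 < T) :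
    (∫ t in Set.Ioc (0 : ℝ) T,
        (Nat.card {s : ℝ | |s| ≤ t ∧ F ((x0 + s : ℝ) : ℂ) = 0} : ℝ) / t) ≤
      4 * T * h + Real.log (1 / ‖F (x0 : ℂ)‖) := by
  classical
  set G : ℂ → ℂ := fun z => F ((x0:ℂ) + z) with hG_def
  have hGdiff : Differentiable ℂ G := hF.comp ((differentiable_const _).add differentiable_id)
  have hG0 : G 0 ≠ 0 := by simpa [hG_def] using h0
  have hGreal : ∀ s : ℝ, G (s:ℂ) = F ((x0 + s : ℝ) : ℂ) := by
    intro s; simp [hG_def, Complex.ofReal_add]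
  -- the finite set of real zeros in [-T, T]
  have hZfin : {s : ℝ | |s| ≤ T ∧ F ((x0 + s : ℝ) : ℂ) = 0}.Finite := by
    apply Set.Finite.of_finite_image (f := fun s : ℝ => (s:ℂ))
    · apply (zeros_finite hGdiff hG0 (isCompact_closedBall (0:ℂ) T)).subset
      rintro z ⟨s, ⟨hsT, hsz⟩, rfl⟩
      constructor
      · simpa [Complex.dist_eq, Complex.norm_real] using hsT
      · rw [hGreal s]; exact hsz
    · exact Complex.ofReal_injective.injOn
  set K : Finset ℝ := hZfin.toFinset with hK_def
  have hmemK : ∀ s : ℝ, s ∈ K ↔ |s| ≤ T ∧ F ((x0 + s : ℝ) : ℂ) = 0 := by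
    intro s; rw [hK_def, Set.Finite.mem_toFinset]; rfl
  have hKne : ∀ s ∈ K, s ≠ 0 := by
    intro s hs hs0
    obtain ⟨-, hz⟩ := (hmemK s).mp hs
    rw [hs0] at hz
    apply h0
    simpa using hz
  have hKpos : ∀ s ∈ K, 0 < |s| := fun s hs => abs_pos.mpr (hKne s hs)
  have hKT : ∀ s ∈ K, |s| ≤ T := fun s hs => ((hmemK s).mp hs).1
  -- Step B : compute the integral as a finite sum
  have hstepB : (∫ t in Set.Ioc (0 : ℝ) T,
      (Nat.card {s : ℝ | |s| ≤ t ∧ F ((x0 + s : ℝ) : ℂ) = 0} : ℝ) / t)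
      = ∑ s ∈ K, (Real.log T - Real.log |s|) := by
    have hcongr : ∀ t ∈ Set.Ioc (0:ℝ) T,
        (Nat.card {s : ℝ | |s| ≤ t ∧ F ((x0 + s : ℝ) : ℂ) = 0} : ℝ) / t
        = ∑ s ∈ K, (if |s| ≤ t then 1/t else 0) := by
      intro t ht
      have hset : {s : ℝ | |s| ≤ t ∧ F ((x0 + s : ℝ) : ℂ) = 0}
          = ↑(K.filter (fun s => |s| ≤ t)) := by
        ext s
        simp only [Set.mem_setOf_eq, Finset.coe_filter, hmemK]
        constructor
        · rintro ⟨h1, h2⟩; exact ⟨⟨h1.trans ht.2, h2⟩, h1⟩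
        · rintro ⟨⟨-, h2⟩, h3⟩; exact ⟨h3, h2⟩
      rw [hset, Nat.card_coe_set_eq, Set.ncard_coe_finset, Finset.card_filter]
      push_cast
      rw [Finset.sum_div]
      apply Finset.sum_congr rfl
      intro s _
      split_ifs <;> simp
    rw [setIntegral_congr_fun measurableSet_Ioc hcongr]
    have hint_s : ∀ s ∈ K, IntegrableOn (fun t => if |s| ≤ t then 1/t else 0)
        (Set.Ioc 0 T) volume := by
      intro s hs
      have heqind : (fun t : ℝ => if |s| ≤ t then 1/t else 0)
          = Set.indicator (Set.Ici |s|) (fun t => 1/t) := by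
        funext t
        rw [Set.indicator_apply]
        congr 1
      rw [heqind, IntegrableOn, integrable_indicator_iff measurableSet_Ici]
      rw [IntegrableOn, Measure.restrict_restrict measurableSet_Ici]
      have hinter : Set.Ici |s| ∩ Set.Ioc 0 T = Set.Icc |s| T := by
        ext t
        simp only [Set.mem_inter_iff, Set.mem_Ici, Set.mem_Ioc, Set.mem_Icc]
        constructor
        · rintro ⟨h1, -, h3⟩; exact ⟨h1, h3⟩
        · rintro ⟨h1, h2⟩; exact ⟨h1, lt_of_lt_of_le (hKpos s hs) h1, h2⟩
      rw [hinter]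
      apply ContinuousOn.integrableOn_compact isCompact_Icc
      apply ContinuousOn.div continuousOn_const continuousOn_id
      intro t ht
      exact ne_of_gt (lt_of_lt_of_le (hKpos s hs) ht.1)
    rw [integral_finset_sum _ hint_s]
    apply Finset.sum_congr rfl
    intro s hs
    have heqind : (fun t : ℝ => if |s| ≤ t then 1/t else 0)
        = Set.indicator (Set.Ici |s|) (fun t => 1/t) := by
      funext t
      rw [Set.indicator_apply]
      congr 1
    rw [heqind, MeasureTheory.integral_indicator measurableSet_Ici,
      Measure.restrict_restrict measurableSet_Ici]
    have hinter : Set.Ici |s| ∩ Set.Ioc 0 T = Set.Icc |s| T := by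
      ext t
      simp only [Set.mem_inter_iff, Set.mem_Ici, Set.mem_Ioc, Set.mem_Icc]
      constructor
      · rintro ⟨h1, -, h3⟩; exact ⟨h1, h3⟩
      · rintro ⟨h1, h2⟩; exact ⟨h1, lt_of_lt_of_le (hKpos s hs) h1, h2⟩
    rw [hinter, integral_Icc_eq_integral_Ioc,
      ← intervalIntegral.integral_of_le (hKT s hs)]
    rw [integral_one_div (by
      rw [Set.uIcc_of_le (hKT s hs)]
      intro hmem
      exact absurd hmem.1 (not_le.mpr (hKpos s hs)))]
    rw [Real.log_div hT.ne' (hKpos s hs).ne']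
  rw [hstepB]
  -- the right-hand side with G
  have hRHS : Real.log (1 / ‖F (x0:ℂ)‖) = - Real.log (‖G 0‖) := by
    rw [one_div, Real.log_inv]
    congr 2
    simp [hG_def]
  rw [hRHS]
  -- epsilon argument
  by_contra hlt
  push_neg at hlt
  set A := ∑ s ∈ K, (Real.log T - Real.log |s|) with hA_def
  set B := 4 * T * h + -Real.log (‖G 0‖) with hB_def
  have hε : 0 < (A - B)/2 := by linarith
  set ε' : ℝ := min ((A-B)/2 / (4*h)) 1 with hε'_def
  have hε'pos : 0 < ε' := lt_min (by positivity) one_pos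
  have hε'le : 4*h*ε' ≤ (A-B)/2 := by
    calc 4*h*ε' ≤ 4*h*((A-B)/2/(4*h)) := by
          apply mul_le_mul_of_nonneg_left (min_le_left _ _) (by positivity)
      _ = (A-B)/2 := by field_simp
  -- choose a good radius
  have hCfin2 := zeros_finite hGdiff hG0 (isCompact_closedBall (0:ℂ) (T+ε'))
  have hbadfin : ((norm : ℂ → ℝ) '' {z : ℂ | z ∈ closedBall (0:ℂ) (T+ε') ∧ G z = 0}).Finite :=
    hCfin2.image _
  obtain ⟨ρ, hρmem⟩ := ((Set.Ioo_infinite (by linarith : T < T + ε')).diff hbadfin).nonempty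
  obtain ⟨⟨hρT, hρT'⟩, hρbad⟩ := hρmem
  have hρpos : 0 < ρ := hT.trans hρT
  have hsph : ∀ z ∈ sphere (0:ℂ) ρ, G z ≠ 0 := by
    intro z hz hGz
    rw [mem_sphere_iff_norm, sub_zero] at hz
    apply hρbad
    refine ⟨z, ⟨?_, hGz⟩, hz⟩
    rw [mem_closedBall, Complex.dist_eq, sub_zero]
    rw [show ‖z‖ = ‖z‖ from rfl, hz]
    linarith
  obtain ⟨S, m, hcover, hprops, hint, heq⟩ := jensen_at_radius hGdiff hG0 hρpos hsph
  -- growth bound on the circle integral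
  have hgb : (∫ θ in (0:ℝ)..(2*π), Real.log (‖G (circleMap 0 ρ θ)‖))
      ≤ ∫ θ in (0:ℝ)..(2*π), 2*π*h*(ρ*|Real.sin θ|) := by
    apply intervalIntegral.integral_mono_on (by positivity) hint
    · exact (continuous_const.mul
        (continuous_const.mul Real.continuous_sin.abs)).intervalIntegrable _ _
    · intro θ hθ
      have hpt_eq : (x0:ℂ) + circleMap 0 ρ θ
          = ((x0 + ρ*Real.cos θ : ℝ):ℂ) + ((ρ*Real.sin θ:ℝ):ℂ)*Complex.I := by
        simp only [circleMap, Complex.ofReal_mul, zero_add]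
        rw [Complex.exp_mul_I]
        push_cast [Complex.ofReal_cos, Complex.ofReal_sin]
        ring
      have hgr := hgrowth (x0 + ρ*Real.cos θ) (ρ*Real.sin θ)
      have hGθ : ‖G (circleMap 0 ρ θ)‖
          ≤ Real.exp (2*π*h*|ρ*Real.sin θ|) := by
        rw [hG_def]
        simp only []
        rw [hpt_eq]
        exact_mod_cast hgr
      have hGne : G (circleMap 0 ρ θ) ≠ 0 :=
        hsph _ (circleMap_mem_sphere 0 hρpos.le θ)
      have hpos : 0 < ‖G (circleMap 0 ρ θ)‖ := norm_pos_iff.mpr hGne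
      have habs2 : |ρ * Real.sin θ| = ρ * |Real.sin θ| := by
        rw [abs_mul, abs_of_pos hρpos]
      have hfin2 := (Real.log_le_iff_le_exp hpos).mpr hGθ
      rw [habs2] at hfin2
      exact hfin2
  have hgb_val : (∫ θ in (0:ℝ)..(2*π), 2*π*h*(ρ*|Real.sin θ|)) = 8*π*h*ρ := by
    have : (fun θ : ℝ => 2*π*h*(ρ*|Real.sin θ|))
        = fun θ : ℝ => (2*π*h*ρ) * |Real.sin θ| := by
      funext θ; ring
    rw [this, intervalIntegral.integral_const_mul, integral_abs_sin]
    ring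
  rw [hgb_val] at hgb
  rw [heq] at hgb
  -- divide by 2π
  have hπ : 0 < π := Real.pi_pos
  have hsum_le : ∑ a ∈ S, (m a : ℝ) * (Real.log ρ - Real.log (‖a‖))
      ≤ 4*h*ρ - Real.log (‖G 0‖) := by nlinarith
  -- lower bound of the sum by the real-zero sum
  have hKS : (K.image (fun s : ℝ => (s:ℂ))) ⊆ S := by
    intro a ha
    obtain ⟨s, hs, rfl⟩ := Finset.mem_image.mp ha
    apply hcover
    · rw [Complex.norm_real, Real.norm_eq_abs]
      exact (hKT s hs).trans (by linarith)
    · rw [hGreal s]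
      exact ((hmemK s).mp hs).2
  have hstep1 : A = ∑ a ∈ K.image (fun s : ℝ => (s:ℂ)),
      (Real.log T - Real.log (‖a‖)) := by
    rw [hA_def, Finset.sum_image (fun x _ y _ hxy => Complex.ofReal_injective hxy)]
    apply Finset.sum_congr rfl
    intro s _
    rw [Complex.norm_real, Real.norm_eq_abs]
  have hstep2 : ∑ a ∈ K.image (fun s : ℝ => (s:ℂ)),
      (Real.log T - Real.log (‖a‖))
      ≤ ∑ a ∈ K.image (fun s : ℝ => (s:ℂ)),
        (m a : ℝ) * (Real.log ρ - Real.log (‖a‖)) := by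
    apply Finset.sum_le_sum
    intro a ha
    obtain ⟨haρ, ha0, ham⟩ := hprops a (hKS ha)
    obtain ⟨s, hs, rfl⟩ := Finset.mem_image.mp ha
    have habs : ‖((s:ℝ):ℂ)‖ = |s| := by rw [Complex.norm_real, Real.norm_eq_abs]
    have h1 : Real.log T ≤ Real.log ρ := Real.log_le_log hT (by linarith)
    have h2 : Real.log (‖((s:ℝ):ℂ)‖) ≤ Real.log ρ := by
      rw [habs]
      apply Real.log_le_log (hKpos s hs)
      linarith [hKT s hs]
    have h3 : (1:ℝ) ≤ (m ((s:ℝ):ℂ) : ℝ) := by exact_mod_cast ham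
    nlinarith
  have hstep3 : ∑ a ∈ K.image (fun s : ℝ => (s:ℂ)),
      (m a : ℝ) * (Real.log ρ - Real.log (‖a‖))
      ≤ ∑ a ∈ S, (m a : ℝ) * (Real.log ρ - Real.log (‖a‖)) := by
    apply Finset.sum_le_sum_of_subset_of_nonneg hKS
    intro a haS _
    obtain ⟨haρ, ha0, ham⟩ := hprops a haS
    have h2 : Real.log (‖a‖) ≤ Real.log ρ :=
      Real.log_le_log (norm_pos_iff.mpr ha0) haρ.le
    have : (0:ℝ) ≤ (m a : ℝ) := Nat.cast_nonneg _
    nlinarith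
  have hfinal : A ≤ 4*h*ρ - Real.log (‖G 0‖) := by
    rw [hstep1]
    linarith
  have : 4*h*ρ ≤ 4*T*h + (A-B)/2 := by
    have : ρ ≤ T + ε' := by linarith
    nlinarith
  rw [hB_def] at hε
  linarith
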